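/- Let T be an invertible contraction on a complex Hilbert space whose asymptotic limit A_T is invertible, let r denote the minimum of the spectrum of A_T, and let M = ker(A_T − rI). Then ‖T^{-1}h‖ = ‖h‖ for all h ∈ M, and T^{-1}M ⊆ M (i.e. M is invariant under T^{-1} and T acts isometrically on it). -/

import Mathlib

open Filter Topology ContinuousLinearMap

set_option maxHeartbeats 1000000 in
set_option synthInstance.maxHeartbeats 400000 in
lemma pos_inner_self_zero {H : Type*} [NormedAddCommGroup H] [InnerProductSpace ℂ H]
    [CompleteSpace H] (B : H →L[ℂ] H) (hB : B.IsPositive) (x : H)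
    (hx : B.reApplyInnerSelf x = 0) : B x = 0 := by
  set S := CFC.sqrt B with hSdef
  have hsq : S ^ 2 = B := CFC.sq_sqrt (ha := (ContinuousLinearMap.nonneg_iff_isPositive B).2 hB)
  have hSpos : S.IsPositive := (ContinuousLinearMap.nonneg_iff_isPositive S).1 (CFC.sqrt_nonneg (a := B))
  have hSsym := (ContinuousLinearMap.isSelfAdjoint_iff_isSymmetric).1 hSpos.isSelfAdjoint
  have hBx : B x = S (S x) := by rw [← hsq]; simp [sq, ContinuousLinearMap.mul_apply]
  have h1 : (inner ℂ (B x) x : ℂ) = inner ℂ (S x) (S x) := by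
    rw [hBx]
    exact hSsym (S x) x
  have h2 : ‖S x‖ ^ 2 = 0 := by
    have := hx
    rw [ContinuousLinearMap.reApplyInnerSelf_apply, h1] at this
    rwa [← @inner_self_eq_norm_sq ℂ]
  have h3 : S x = 0 := by
    rw [pow_eq_zero_iff (two_ne_zero), norm_eq_zero] at h2; exact h2
  rw [hBx, h3, map_zero]

theorem stmt16 {H : Type*} [NormedAddCommGroup H] [InnerProductSpace ℂ H] [CompleteSpace H]
    (T T' A : H →L[ℂ] H) (hT : ‖T‖ ≤ 1)
    (hTT' : T * T' = 1) (hT'T : T' * T = 1)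
    (hA : A.IsPositive)
    (r : ℝ) (hr0 : 0 < r) (hrmem : (r : ℂ) ∈ spectrum ℂ A)
    (hrlow : ∀ x : H, r * ‖x‖ ^ 2 ≤ A.reApplyInnerSelf x)
    (hAT : ∀ x : H, A.reApplyInnerSelf (T x) = A.reApplyInnerSelf x) :
    ∀ h : H, A h = (r : ℂ) • h → ‖T' h‖ = ‖h‖ ∧ A (T' h) = (r : ℂ) • (T' h) := by
  intro h hh
  set x := T' h with hx
  have hTx : T x = h := by
    have := congrArg (fun S => S h) hTT'
    simpa [ContinuousLinearMap.mul_apply] using this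
  -- re ⟪A h, h⟫ = r ‖h‖²
  have hAh : A.reApplyInnerSelf h = r * ‖h‖ ^ 2 := by
    rw [ContinuousLinearMap.reApplyInnerSelf_apply, hh, inner_smul_left]
    simp [← @inner_self_eq_norm_sq ℂ, RCLike.inner_apply]
  have hAx : A.reApplyInnerSelf x = r * ‖h‖ ^ 2 := by
    rw [← hAh, ← hAT x, hTx]
  -- ‖x‖ ≤ ‖h‖
  have hle : ‖x‖ ≤ ‖h‖ := by
    have := hrlow x
    rw [hAx] at this
    have : ‖x‖ ^ 2 ≤ ‖h‖ ^ 2 := le_of_mul_le_mul_left (by linarith) hr0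
    nlinarith [norm_nonneg x, norm_nonneg h]
  have hge : ‖h‖ ≤ ‖x‖ := by
    calc ‖h‖ = ‖T x‖ := by rw [hTx]
    _ ≤ ‖T‖ * ‖x‖ := T.le_opNorm x
    _ ≤ 1 * ‖x‖ := by
        exact mul_le_mul_of_nonneg_right hT (norm_nonneg x)
    _ = ‖x‖ := one_mul _
  have hnorm : ‖x‖ = ‖h‖ := le_antisymm hle hge
  refine ⟨hnorm, ?_⟩
  -- B = A - r • 1 is positive and re ⟪B x, x⟫ = 0
  set B : H →L[ℂ] H := A - (r : ℂ) • 1 with hBdef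
  have hBapply : ∀ y : H, B y = A y - (r : ℂ) • y := by
    intro y; simp [hBdef]
  have hBre : ∀ y : H, B.reApplyInnerSelf y = A.reApplyInnerSelf y - r * ‖y‖ ^ 2 := by
    intro y
    rw [ContinuousLinearMap.reApplyInnerSelf_apply, ContinuousLinearMap.reApplyInnerSelf_apply,
      hBapply, inner_sub_left, inner_smul_left]
    simp [← @inner_self_eq_norm_sq ℂ, RCLike.inner_apply]
  have hBpos : B.IsPositive := by
    constructor
    · have h1 : IsSelfAdjoint A := hA.isSelfAdjoint
      have h2 : IsSelfAdjoint ((r : ℂ) • (1 : H →L[ℂ] H)) := by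
        rw [IsSelfAdjoint]
        rw [star_smul]
        simp [Complex.star_def, Complex.conj_ofReal]
      exact (ContinuousLinearMap.isSelfAdjoint_iff_isSymmetric).1 (h1.sub h2)
    · intro y
      rw [hBre]
      linarith [hrlow y]
  have hBx0 : B.reApplyInnerSelf x = 0 := by
    rw [hBre, hAx, hnorm]; ring
  have := pos_inner_self_zero B hBpos x hBx0
  rw [hBapply, sub_eq_zero] at this
  exact this
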